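/- For all real θ > 0, α > −1 and all x, y > 0, the limit kernel satisfies the symmetry relation 𝒦^{(α,θ)}(y^{1/θ}, x^{1/θ}) = θ · 𝒦^{((α+1)/θ − 1, 1/θ)}(x, y). (Note that α' = (α+1)/θ − 1 > −1 and θ' = 1/θ > 0, and the map (α,θ) ↦ (α',θ') is an involution.) -/

import Mathlib

/-- The limit kernel `𝒦^{(α,θ)}(x,y)` of the biorthogonal Jacobi/Laguerre ensembles. -/
noncomputable def limitKernel (α θ x y : ℝ) : ℝ :=
  ∑' k : ℕ, ∑' l : ℕ,
    ((-1) ^ k * x ^ k / ((Nat.factorial k : ℝ) * Real.Gamma ((α + 1 + k) / θ))) *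
      ((-1) ^ l * y ^ (θ * (l : ℝ)) /
        ((Nat.factorial l : ℝ) * Real.Gamma (α + 1 + θ * l))) *
      (θ / (α + 1 + k + θ * l))

/-- For `2 ≤ t`, `1 ≤ Γ t`. -/
lemma one_le_Gamma_of_two_le {t : ℝ} (ht : 2 ≤ t) : 1 ≤ Real.Gamma t := by
  rcases eq_or_lt_of_le ht with h | h
  · rw [← h, Real.Gamma_two]
  · have := Real.Gamma_strictMonoOn_Ici (Set.mem_Ici.2 le_rfl)
      (Set.mem_Ici.2 ht) h
    rw [Real.Gamma_two] at this
    exact this.le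

/-- A positive sequence that is eventually `≥ 1` has a positive lower bound. -/
lemma exists_pos_lb (u : ℕ → ℝ) (hpos : ∀ k, 0 < u k) (N : ℕ)
    (hN : ∀ k, N ≤ k → 1 ≤ u k) : ∃ c, 0 < c ∧ ∀ k, c ≤ u k := by
  classical
  have hSne : (insert (1:ℝ) ((Finset.range (N + 1)).image u)).Nonempty := ⟨1, by simp⟩
  refine ⟨(insert (1:ℝ) ((Finset.range (N + 1)).image u)).min' hSne, ?_, ?_⟩
  · rcases Finset.mem_insert.1 ((insert (1:ℝ) ((Finset.range (N + 1)).image u)).min'_mem hSne)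
      with h | h
    · rw [h]; norm_num
    · rcases Finset.mem_image.1 h with ⟨j, _, hj⟩
      rw [← hj]; exact hpos j
  · intro k
    rcases le_or_gt k N with hk | hk
    · exact Finset.min'_le _ _ (Finset.mem_insert_of_mem
        (Finset.mem_image.2 ⟨k, Finset.mem_range.2 (by omega), rfl⟩))
    · calc _ ≤ (1:ℝ) := Finset.min'_le _ _ (by simp)
        _ ≤ u k := hN k (by omega)

set_option maxHeartbeats 1600000 in
/-- **Symmetry of the limit kernel:**
`𝒦^{(α,θ)}(y^{1/θ}, x^{1/θ}) = θ ⬝ 𝒦^{((α+1)/θ-1, 1/θ)}(x, y)`. -/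
theorem limitKernel_symmetry (θ α : ℝ) (hθ : 0 < θ) (hα : -1 < α)
    (x y : ℝ) (hx : 0 < x) (hy : 0 < y) :
    limitKernel α θ (y ^ (1 / θ)) (x ^ (1 / θ)) =
      θ * limitKernel ((α + 1) / θ - 1) (1 / θ) x y := by
  have hθ0 : θ ≠ 0 := hθ.ne'
  have hβ : (0:ℝ) < α + 1 := by linarith
  set Y : ℝ := y ^ (1 / θ) with hY
  have hYpos : 0 < Y := Real.rpow_pos_of_pos hy _
  -- the common summand
  set f : ℕ → ℕ → ℝ := fun k l =>
    ((-1) ^ k * Y ^ k / ((Nat.factorial k : ℝ) * Real.Gamma ((α + 1 + k) / θ))) *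
      ((-1) ^ l * x ^ l / ((Nat.factorial l : ℝ) * Real.Gamma (α + 1 + θ * l))) *
      (θ / (α + 1 + k + θ * l)) with hfdef
  -- positivity of Gamma values
  have hG1 : ∀ k : ℕ, 0 < Real.Gamma ((α + 1 + k) / θ) := fun k =>
    Real.Gamma_pos_of_pos (by positivity)
  have hG2 : ∀ l : ℕ, 0 < Real.Gamma (α + 1 + θ * l) := fun l =>
    Real.Gamma_pos_of_pos (by positivity)
  -- lower bounds for the Gamma sequences
  obtain ⟨c1, hc1, hc1'⟩ : ∃ c, 0 < c ∧ ∀ k : ℕ, c ≤ Real.Gamma ((α + 1 + k) / θ) := by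
    refine exists_pos_lb _ hG1 ⌈2 * θ⌉₊ fun k hk => one_le_Gamma_of_two_le ?_
    have h2θ : 2 * θ ≤ (k : ℝ) := (Nat.ceil_le.1 hk)
    rw [le_div_iff₀ hθ]
    linarith
  obtain ⟨c2, hc2, hc2'⟩ : ∃ c, 0 < c ∧ ∀ l : ℕ, c ≤ Real.Gamma (α + 1 + θ * l) := by
    refine exists_pos_lb _ hG2 ⌈2 / θ⌉₊ fun l hl => one_le_Gamma_of_two_le ?_
    have h2θ : 2 / θ ≤ (l : ℝ) := (Nat.ceil_le.1 hl)
    have : 2 ≤ θ * l := by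
      rw [div_le_iff₀ hθ] at h2θ
      linarith [h2θ]
    linarith
  -- summability of the double sequence
  have hsum : Summable (Function.uncurry f) := by
    rw [← summable_abs_iff]
    have hb : Summable (fun p : ℕ × ℕ =>
        ((Y ^ p.1 / (Nat.factorial p.1 : ℝ) / c1) *
          (x ^ p.2 / (Nat.factorial p.2 : ℝ) / c2)) * (θ / (α + 1))) := by
      apply Summable.mul_right
      exact Summable.mul_of_nonneg
        ((Real.summable_pow_div_factorial Y).div_const c1)
        ((Real.summable_pow_div_factorial x).div_const c2)
        (fun k => by positivity) (fun l => by positivity)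
    refine hb.of_nonneg_of_le (fun p => abs_nonneg _) fun p => ?_
    obtain ⟨k, l⟩ := p
    have hD3 : (0:ℝ) < α + 1 + k + θ * l := by positivity
    have habs : |Function.uncurry f (k, l)| =
        (Y ^ k / ((Nat.factorial k : ℝ) * Real.Gamma ((α + 1 + k) / θ))) *
          (x ^ l / ((Nat.factorial l : ℝ) * Real.Gamma (α + 1 + θ * l))) *
          (θ / (α + 1 + k + θ * l)) := by
      simp only [Function.uncurry, hfdef, abs_mul, abs_div, abs_pow, abs_neg, abs_one,
        one_pow, one_mul]
      rw [abs_of_pos hYpos, abs_of_pos hx, abs_of_pos hθ, abs_of_pos hD3,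
        abs_of_pos (hG1 k), abs_of_pos (hG2 l),
        abs_of_nonneg (Nat.cast_nonneg k.factorial),
        abs_of_nonneg (Nat.cast_nonneg l.factorial)]
    rw [habs]
    have e1 : Y ^ k / ((Nat.factorial k : ℝ) * Real.Gamma ((α + 1 + k) / θ)) ≤
        Y ^ k / (Nat.factorial k : ℝ) / c1 := by
      rw [div_div]
      gcongr
      exact hc1' k
    have e2 : x ^ l / ((Nat.factorial l : ℝ) * Real.Gamma (α + 1 + θ * l)) ≤
        x ^ l / (Nat.factorial l : ℝ) / c2 := by
      rw [div_div]
      gcongr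
      exact hc2' l
    have e3 : θ / (α + 1 + k + θ * l) ≤ θ / (α + 1) :=
      div_le_div_of_nonneg_left hθ.le hβ
        (by nlinarith [Nat.cast_nonneg (α := ℝ) k, mul_nonneg hθ.le (Nat.cast_nonneg (α := ℝ) l)])
    exact mul_le_mul (mul_le_mul e1 e2 (by positivity) (by positivity)) e3
      (by positivity) (by positivity)
  -- LHS equals the iterated sum of f
  have hL : limitKernel α θ (y ^ (1 / θ)) (x ^ (1 / θ)) = ∑' k, ∑' l, f k l := by
    unfold limitKernel
    refine tsum_congr fun k => tsum_congr fun l => ?_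
    rw [hfdef]
    have hxl : (x ^ (1 / θ)) ^ (θ * (l : ℝ)) = x ^ l := by
      rw [← Real.rpow_natCast x l, ← Real.rpow_mul hx.le]
      congr 1
      field_simp
    rw [hxl]
  -- RHS equals the iterated sum of f with swapped arguments
  have hR : θ * limitKernel ((α + 1) / θ - 1) (1 / θ) x y = ∑' k, ∑' l, f l k := by
    unfold limitKernel
    rw [← tsum_mul_left]
    refine tsum_congr fun k => ?_
    rw [← tsum_mul_left]
    refine tsum_congr fun l => ?_
    rw [hfdef]
    have eG1 : ((α + 1) / θ - 1 + 1 + (k : ℝ)) / (1 / θ) = α + 1 + θ * k := by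
      field_simp
      ring
    have eG2 : (α + 1) / θ - 1 + 1 + 1 / θ * (l : ℝ) = (α + 1 + l) / θ := by
      field_simp
      ring
    have eY : y ^ (1 / θ * (l : ℝ)) = Y ^ l := by
      rw [hY, ← Real.rpow_natCast (y ^ (1 / θ)) l, ← Real.rpow_mul hy.le]
    have eD : (α + 1) / θ - 1 + 1 + (k : ℝ) + 1 / θ * l = (α + 1 + l + θ * k) / θ := by
      field_simp
      ring
    rw [eG1, eG2, eY, eD]
    have hD : (0:ℝ) < α + 1 + l + θ * k := by positivity
    have hG2k := (hG2 k).ne'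
    have hG1l := (hG1 l).ne'
    field_simp
  rw [hL, hR]
  exact (Summable.tsum_comm hsum).symm
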